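/- Assume n > 0 and let r = k(d−1) + n·d(d−1)/2 − (d−1). Then any two r-markings on the curve Γ satisfying property (*) are equivalent under D-moves and T-moves. -/

import Mathlib

namespace SeveriMarkings

/-- Components of the curve Γ: `L_1, …, L_d` (left) and `F_1, …, F_k` (right). -/
abbrev Comp (d k : ℕ) := Sum (Fin d) (Fin k)

/-- Nodes (edges of the multigraph `G(n,d,k)`): `n` edges between `L_i` and `L_j` for `i < j`,
and one edge between each `L_i` and each `F_j`. -/
abbrev Node (n d k : ℕ) :=
  Sum (({p : Fin d × Fin d // p.1 < p.2}) × Fin n) (Fin d × Fin k)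

/-- The two endpoints of a node. -/
def ends {n d k : ℕ} : Node n d k → Comp d k × Comp d k
  | Sum.inl e => (Sum.inl e.1.1.1, Sum.inl e.1.1.2)
  | Sum.inr e => (Sum.inl e.1, Sum.inr e.2)

/-- `joins e C C'` means the node `e` lies in `C ∩ C'`. -/
def joins {n d k : ℕ} (e : Node n d k) (C C' : Comp d k) : Prop :=
  ends e = (C, C') ∨ ends e = (C', C)

/-- `touches e C` means the node `e` is incident to the component `C`. -/
def touches {n d k : ℕ} (e : Node n d k) (C : Comp d k) : Prop :=
  (ends e).1 = C ∨ (ends e).2 = C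

/-- The simple graph on the components obtained after deleting a set `E` of edges:
two components are adjacent if some remaining edge joins them. Its connectivity is
equivalent to connectivity of the multigraph obtained from `G(n,d,k)` by deleting `E`. -/
def remGraph (n d k : ℕ) (E : Set (Node n d k)) : SimpleGraph (Comp d k) :=
  SimpleGraph.fromRel (fun u v => ∃ e, e ∉ E ∧ ends e = (u, v))

/-- A marking `μ` (an injective tuple of nodes) is irreducible if deleting its entries
from `G(n,d,k)` leaves a connected (multi)graph. -/
def IsIrreducible {n d k r : ℕ} (μ : Fin r → Node n d k) : Prop :=
  (remGraph n d k (Set.range μ)).Connected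

/-- The intersection number `C.C'`: the number of edges between `C` and `C'`. -/
noncomputable def interNum (n d k : ℕ) (C C' : Comp d k) : ℕ :=
  Nat.card {e : Node n d k // joins e C C'}

/-- `μ_{C,C'}`: the number of entries of `μ` lying in `C ∩ C'`. -/
noncomputable def markCount {n d k r : ℕ} (μ : Fin r → Node n d k) (C C' : Comp d k) : ℕ :=
  Nat.card {i : Fin r // joins (μ i) C C'}

/-- `μ_C`: the number of entries of `μ` incident to `C`. -/
noncomputable def compCount {n d k r : ℕ} (μ : Fin r → Node n d k) (C : Comp d k) : ℕ :=
  Nat.card {i : Fin r // touches (μ i) C}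

/-- A single D-move. -/
def DMove {n d k r : ℕ} (μ μ' : Fin r → Node n d k) : Prop :=
  ∃ (D D' : Comp d k) (q q' : Node n d k),
    D ≠ D' ∧ q ≠ q' ∧ joins q D D' ∧ joins q' D D' ∧
    ( (q ∉ Set.range μ ∧ ∃ i, μ i = q' ∧ μ' = Function.update μ i q)
    ∨ (q' ∉ Set.range μ ∧ ∃ i, μ i = q ∧ μ' = Function.update μ i q')
    ∨ (∃ i j, μ i = q ∧ μ j = q' ∧ μ' = μ ∘ Equiv.swap i j)
    ∨ (q ∉ Set.range μ ∧ q' ∉ Set.range μ ∧ μ' = μ) )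

/-- A single T-move. -/
def TMove {n d k r : ℕ} (μ μ' : Fin r → Node n d k) : Prop :=
  ∃ (D D' D'' : Comp d k) (q q' q'' : Node n d k),
    D ≠ D' ∧ D ≠ D'' ∧ D' ≠ D'' ∧
    joins q D' D'' ∧ joins q' D D'' ∧ joins q'' D D' ∧
    ( (q' ∈ Set.range μ ∧ μ' = μ)
    ∨ (q' ∉ Set.range μ ∧
        ( (q'' ∉ Set.range μ ∧ ∃ i, μ i = q ∧ μ' = Function.update μ i q'')
        ∨ (q ∉ Set.range μ ∧ ∃ i, μ i = q'' ∧ μ' = Function.update μ i q)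
        ∨ (∃ i j, μ i = q ∧ μ j = q'' ∧ μ' = μ ∘ Equiv.swap i j)
        ∨ (q ∉ Set.range μ ∧ q'' ∉ Set.range μ ∧ μ' = μ))) )

/-- Equivalence of markings: a finite sequence of D-moves and T-moves. -/
def MarkEquiv {n d k r : ℕ} (μ μ' : Fin r → Node n d k) : Prop :=
  Relation.ReflTransGen (fun a b => DMove a b ∨ TMove a b) μ μ'

/-- Property (*) relative to the distinguished component `Ld`. -/
def PropertyStar {n d k r : ℕ} (Ld : Comp d k) (μ : Fin r → Node n d k) : Prop :=
  ∀ C C' : Comp d k, C ≠ C' →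
    markCount μ C C' =
      if Ld = C ∨ Ld = C' then interNum n d k C C' - 1 else interNum n d k C C'

section Aux

variable {n d k r : ℕ}

lemma ends_ne (e : Node n d k) : (ends e).1 ≠ (ends e).2 := by
  cases e with
  | inl e =>
    simp only [ends]
    intro h
    exact absurd (Sum.inl.inj h) (Fin.ne_of_lt e.1.2)
  | inr e => simp [ends]

lemma joins_symm {e : Node n d k} {C C' : Comp d k} (h : joins e C C') : joins e C' C :=
  h.symm

lemma joins_ne {e : Node n d k} {C C' : Comp d k} (h : joins e C C') : C ≠ C' := by
  rcases h with h | h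
  · intro hC; exact ends_ne e (by rw [h, hC])
  · intro hC; exact ends_ne e (by rw [h, hC])

lemma joins_of_ends {e : Node n d k} : joins e (ends e).1 (ends e).2 := Or.inl rfl

lemma joins_iff_of_ends_eq {x y : Node n d k} (h : ends x = ends y) (C C' : Comp d k) :
    (joins x C C' ↔ joins y C C') := by
  unfold joins; rw [h]

lemma joins_pair {e : Node n d k} {A B C D : Comp d k}
    (h1 : joins e A B) (h2 : joins e C D) : (A = C ∧ B = D) ∨ (A = D ∧ B = C) := by
  rcases h1 with h1 | h1 <;> rcases h2 with h2 | h2 <;>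
    rw [h1] at h2 <;> injection h2 with ha hb <;> subst ha <;> subst hb <;> simp

lemma ends_not_swap {x y : Node n d k}
    (h : ends x = ((ends y).2, (ends y).1)) : False := by
  cases x with
  | inl a =>
    cases y with
    | inl b =>
      simp only [ends, Prod.mk.injEq] at h
      have h1 := a.1.2
      have h2 := b.1.2
      have e1 : a.1.1.1 = b.1.1.2 := Sum.inl.inj h.1
      have e2 : a.1.1.2 = b.1.1.1 := Sum.inl.inj h.2
      rw [e1, e2] at h1
      exact absurd h2 (not_lt.2 h1.le)
    | inr b => simp [ends, Prod.mk.injEq] at h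
  | inr a =>
    cases y with
    | inl b => simp [ends, Prod.mk.injEq] at h
    | inr b => simp [ends, Prod.mk.injEq] at h

/-- Two nodes joining the same pair of components have the same endpoints. -/
lemma ends_eq_of_joins {x y : Node n d k} {C C' : Comp d k}
    (hx : joins x C C') (hy : joins y C C') : ends x = ends y := by
  rcases hx with hx | hx <;> rcases hy with hy | hy
  · rw [hx, hy]
  · exact absurd (by rw [hx, hy]) (fun h => ends_not_swap (x := x) (y := y) h)
  · exact absurd (by rw [hx, hy]) (fun h => ends_not_swap (x := x) (y := y) h)
  · rw [hx, hy]

lemma markCount_comp_perm (ν : Fin r → Node n d k) (σ : Equiv.Perm (Fin r)) (C C' : Comp d k) :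
    markCount (ν ∘ σ) C C' = markCount ν C C' :=
  Nat.card_congr (Equiv.subtypeEquiv σ (fun _ => Iff.rfl))

lemma markCount_update (ν : Fin r → Node n d k) (i : Fin r) (a : Node n d k)
    (h : ends a = ends (ν i)) (C C' : Comp d k) :
    markCount (Function.update ν i a) C C' = markCount ν C C' := by
  apply Nat.card_congr (Equiv.subtypeEquivRight _)
  intro l
  rcases eq_or_ne l i with rfl | hl
  · simp [Function.update_self, joins_iff_of_ends_eq h]
  · simp [Function.update_of_ne hl]

lemma star_comp_perm {Ld : Comp d k} {ν : Fin r → Node n d k} (hs : PropertyStar Ld ν)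
    (σ : Equiv.Perm (Fin r)) : PropertyStar Ld (ν ∘ σ) := by
  intro C C' hCC'
  rw [markCount_comp_perm]
  exact hs C C' hCC'

lemma star_update {Ld : Comp d k} {ν : Fin r → Node n d k} (hs : PropertyStar Ld ν)
    (i : Fin r) (a : Node n d k) (h : ends a = ends (ν i)) :
    PropertyStar Ld (Function.update ν i a) := by
  intro C C' hCC'
  rw [markCount_update ν i a h]
  exact hs C C' hCC'

lemma inj_update {ν : Fin r → Node n d k} (hinj : Function.Injective ν)
    (i : Fin r) {a : Node n d k} (ha : a ∉ Set.range ν) :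
    Function.Injective (Function.update ν i a) := by
  intro l m hlm
  by_cases hl : l = i
  · by_cases hm : m = i
    · rw [hl, hm]
    · rw [hl, Function.update_self, Function.update_of_ne hm] at hlm
      exact absurd ⟨m, hlm.symm⟩ ha
  · by_cases hm : m = i
    · rw [hm, Function.update_self, Function.update_of_ne hl] at hlm
      exact absurd ⟨l, hlm⟩ ha
    · rw [Function.update_of_ne hl, Function.update_of_ne hm] at hlm
      exact hinj hlm

lemma notMem_range_update {ν : Fin r → Node n d k} {i : Fin r} {a m : Node n d k}
    (hm : m ∉ Set.range ν) (hma : m ≠ a) : m ∉ Set.range (Function.update ν i a) := by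
  rintro ⟨l, hl⟩
  rcases eq_or_ne l i with rfl | h
  · rw [Function.update_self] at hl; exact hma hl.symm
  · rw [Function.update_of_ne h] at hl; exact hm ⟨l, hl⟩

lemma self_notMem_range_update {ν : Fin r → Node n d k} (hinj : Function.Injective ν)
    {i : Fin r} {a : Node n d k} (ha : ν i ≠ a) :
    ν i ∉ Set.range (Function.update ν i a) := by
  rintro ⟨l, hl⟩
  rcases eq_or_ne l i with rfl | h
  · rw [Function.update_self] at hl; exact ha hl.symm
  · rw [Function.update_of_ne h] at hl; exact h (hinj hl)

lemma range_comp_perm (ν : Fin r → Node n d k) (σ : Equiv.Perm (Fin r)) :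
    Set.range (ν ∘ σ) = Set.range ν := by
  ext x
  constructor
  · rintro ⟨l, hl⟩; exact ⟨σ l, hl⟩
  · rintro ⟨l, hl⟩; exact ⟨σ.symm l, by simp [hl]⟩

/-- Every node not touching `Ld` is in the range of a marking satisfying (*). -/
lemma star_full {Ld : Comp d k} {μ : Fin r → Node n d k} (hs : PropertyStar Ld μ)
    (hinj : Function.Injective μ) (x : Node n d k) (hx : ¬ touches x Ld) :
    x ∈ Set.range μ := by
  by_contra hxr
  have hCC' : (ends x).1 ≠ (ends x).2 := ends_ne x
  have hmc := hs (ends x).1 (ends x).2 hCC'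
  rw [if_neg (by rintro (h | h) <;> exact hx (by unfold touches; simp [← h]))] at hmc
  have key : Nat.card ({i : Fin r // joins (μ i) (ends x).1 (ends x).2} ⊕ PUnit.{1}) ≤
      Nat.card {e : Node n d k // joins e (ends x).1 (ends x).2} := by
    apply Nat.card_le_card_of_injective
      (fun z => match z with
        | Sum.inl i => ⟨μ i.1, i.2⟩
        | Sum.inr (_ : PUnit.{1}) => ⟨x, joins_of_ends⟩)
    rintro (⟨i, hi⟩ | ⟨⟩) (⟨j, hj⟩ | ⟨⟩) h
    · simp only [Subtype.mk.injEq, Sum.inl.injEq] at h ⊢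
      exact hinj h
    · exact absurd ⟨i, (Subtype.ext_iff.1 h)⟩ hxr
    · exact absurd ⟨j, (Subtype.ext_iff.1 h).symm⟩ hxr
    · rfl
  rw [Nat.card_sum] at key
  simp only [Nat.card_unique] at key
  unfold markCount interNum at hmc
  omega

/-- For each component `C ≠ Ld` joined to `Ld`, some node of `C ∩ Ld` is missing. -/
lemma star_missing {Ld : Comp d k} {μ : Fin r → Node n d k} (hs : PropertyStar Ld μ)
    {C : Comp d k} (hC : C ≠ Ld) {w : Node n d k} (hw : joins w C Ld) :
    ∃ m, joins m C Ld ∧ m ∉ Set.range μ := by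
  by_contra hall
  push_neg at hall
  have hmc := hs C Ld hC
  rw [if_pos (Or.inr rfl)] at hmc
  have hpos : 0 < interNum n d k C Ld := by
    have : Nonempty {e : Node n d k // joins e C Ld} := ⟨⟨w, hw⟩⟩
    exact Nat.card_pos
  have key : interNum n d k C Ld ≤ markCount μ C Ld := by
    apply Nat.card_le_card_of_injective
      (fun e => (⟨(hall e.1 e.2).choose, by
        rw [(hall e.1 e.2).choose_spec]; exact e.2⟩ : {i : Fin r // joins (μ i) C Ld}))
    intro e1 e2 h
    apply Subtype.ext
    have h2 := congrArg (fun z : {i : Fin r // joins (μ i) C Ld} => μ z.1) h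
    simpa only [(hall e1.1 e1.2).choose_spec, (hall e2.1 e2.2).choose_spec] using h2
  omega

/-- At most one node of `C ∩ Ld` is missing. -/
lemma star_unique_missing {Ld : Comp d k} {μ : Fin r → Node n d k} (hs : PropertyStar Ld μ)
    (hinj : Function.Injective μ) {C : Comp d k} (hC : C ≠ Ld) {e g : Node n d k} (he : joins e C Ld) (hg : joins g C Ld)
    (heg : e ≠ g) (her : e ∉ Set.range μ) (hgr : g ∉ Set.range μ) : False := by
  have hmc := hs C Ld hC
  rw [if_pos (Or.inr rfl)] at hmc
  have key : Nat.card (({i : Fin r // joins (μ i) C Ld} ⊕ Bool)) ≤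
      Nat.card {x : Node n d k // joins x C Ld} := by
    apply Nat.card_le_card_of_injective
      (fun z => match z with
        | Sum.inl i => ⟨μ i.1, i.2⟩
        | Sum.inr b => if b then ⟨e, he⟩ else ⟨g, hg⟩)
    rintro (⟨i, hi⟩ | b1) (⟨j, hj⟩ | b2) h
    · simp only [Subtype.mk.injEq, Sum.inl.injEq] at h ⊢
      exact hinj h
    · exfalso
      cases b2 <;> simp only [Bool.false_eq_true, if_true, if_false, Subtype.mk.injEq] at h
      · exact hgr ⟨i, h⟩
      · exact her ⟨i, h⟩
    · exfalso
      cases b1 <;> simp only [Bool.false_eq_true, if_true, if_false, Subtype.mk.injEq] at h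
      · exact hgr ⟨j, h.symm⟩
      · exact her ⟨j, h.symm⟩
    · cases b1 <;> cases b2 <;> simp_all
  rw [Nat.card_sum] at key
  simp only [Nat.card_eq_fintype_card, Fintype.card_bool] at key
  unfold markCount interNum at hmc
  omega

lemma eq_of_joins_LF {x : Node n d k} {a : Fin d} {s : Fin k}
    (h : joins x (Sum.inl a) (Sum.inr s)) : x = Sum.inr (a, s) := by
  cases x with
  | inl e =>
    exfalso
    rcases h with h | h <;> simp [ends, Prod.ext_iff] at h
  | inr e =>
    rcases h with h | h <;> simp only [ends, Prod.mk.injEq] at h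
    · obtain ⟨h1, h2⟩ := h
      have e1 : e.1 = a := Sum.inl.inj h1
      have e2 : e.2 = s := Sum.inr.inj h2
      rw [← e1, ← e2]
    · simp at h

/-- The distinguished component. -/
def LD {d k : ℕ} (hd : 0 < d) : Comp d k := Sum.inl ⟨d - 1, by omega⟩

section WithLd

/-- For every component `C ≠ LD` there is a node missing from the range. -/
lemma missing_any (hn : 0 < n) (hd : 0 < d) {μ : Fin r → Node n d k} (hs : PropertyStar (LD hd) μ)
    (C : Comp d k) (hC : C ≠ LD hd) :
    ∃ m, joins m C (LD hd) ∧ m ∉ Set.range μ := by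
  cases C with
  | inl a =>
    have ha : (a : ℕ) ≠ d - 1 := by
      intro h
      exact hC (by unfold LD; rw [Sum.inl.injEq]; exact Fin.ext h)
    have hav : (a : ℕ) < d - 1 := by have := a.2; omega
    exact star_missing hs hC
      (w := Sum.inl ⟨⟨(a, ⟨d - 1, by omega⟩), hav⟩, ⟨0, hn⟩⟩) (Or.inl rfl)
  | inr s =>
    exact star_missing hs hC (w := Sum.inr (⟨d - 1, by omega⟩, s)) (Or.inr rfl)

/-- No entry of a (*)-marking lies on a node between `LD` and a fiber. -/
lemma range_LF_ne (hd : 0 < d) {μ : Fin r → Node n d k} (hs : PropertyStar (LD hd) μ)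
    {i : Fin r} {a : Fin d} {s : Fin k} (h : μ i = Sum.inr (a, s)) : (a : ℕ) ≠ d - 1 := by
  intro hav
  have haLD : Sum.inl a = LD (k := k) hd := by unfold LD; rw [Sum.inl.injEq]; exact Fin.ext hav
  have hj : joins (μ i) (Sum.inr s) (LD hd) := by
    rw [h, ← haLD]; exact Or.inr rfl
  have hC : (Sum.inr s : Comp d k) ≠ LD hd := by unfold LD; simp
  have hmc := hs (Sum.inr s) (LD hd) hC
  rw [if_pos (Or.inr rfl)] at hmc
  have hpos : 0 < markCount μ (Sum.inr s) (LD hd) := by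
    have : Nonempty {l : Fin r // joins (μ l) (Sum.inr s) (LD hd)} := ⟨⟨i, hj⟩⟩
    exact Nat.card_pos
  have h2 : 2 ≤ interNum n d k (Sum.inr s) (LD hd) := by omega
  have : Nontrivial {x : Node n d k // joins x (Sum.inr s) (LD hd)} := by
    rw [← Finite.one_lt_card_iff_nontrivial]
    exact h2
  obtain ⟨⟨x, hx⟩, ⟨y, hy⟩, hxy⟩ := this
  rw [← haLD] at hx hy
  have hx' := eq_of_joins_LF (joins_symm hx)
  have hy' := eq_of_joins_LF (joins_symm hy)
  exact hxy (Subtype.ext (hx'.trans hy'.symm))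

end WithLd

section Moves

variable {ν : Fin r → Node n d k}

lemma markEquiv_dswap {i j : Fin r} {C C' : Comp d k} (hC : C ≠ C')
    (hi : joins (ν i) C C') (hj : joins (ν j) C C') (hne : ν i ≠ ν j) :
    MarkEquiv ν (ν ∘ Equiv.swap i j) :=
  Relation.ReflTransGen.single (Or.inl ⟨C, C', ν i, ν j, hC, hne, hi, hj,
    Or.inr (Or.inr (Or.inl ⟨i, j, rfl, rfl, rfl⟩))⟩)

lemma markEquiv_dreplace {i : Fin r} {C C' : Comp d k} (hC : C ≠ C') {q' : Node n d k}
    (hi : joins (ν i) C C') (hq' : joins q' C C') (hne : ν i ≠ q')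
    (hq'r : q' ∉ Set.range ν) :
    MarkEquiv ν (Function.update ν i q') :=
  Relation.ReflTransGen.single (Or.inl ⟨C, C', ν i, q', hC, hne, hi, hq',
    Or.inr (Or.inl ⟨hq'r, i, rfl, rfl⟩)⟩)

lemma markEquiv_tswap {i j : Fin r} {X Y Z : Comp d k}
    (hXY : X ≠ Y) (hXZ : X ≠ Z) (hYZ : Y ≠ Z)
    (hq : joins (ν i) Y Z) (hq'' : joins (ν j) X Y) {q' : Node n d k}
    (hq' : joins q' X Z) (hq'r : q' ∉ Set.range ν) :
    MarkEquiv ν (ν ∘ Equiv.swap i j) :=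
  Relation.ReflTransGen.single (Or.inr ⟨X, Y, Z, ν i, q', ν j, hXY, hXZ, hYZ, hq, hq', hq'',
    Or.inr ⟨hq'r, Or.inr (Or.inr (Or.inl ⟨i, j, rfl, rfl, rfl⟩))⟩⟩)

lemma markEquiv_treplace {i : Fin r} {X Y Z : Comp d k}
    (hXY : X ≠ Y) (hXZ : X ≠ Z) (hYZ : Y ≠ Z)
    (hq : joins (ν i) Y Z) {q' q'' : Node n d k}
    (hq' : joins q' X Z) (hq'' : joins q'' X Y)
    (hq'r : q' ∉ Set.range ν) (hq''r : q'' ∉ Set.range ν) :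
    MarkEquiv ν (Function.update ν i q'') :=
  Relation.ReflTransGen.single (Or.inr ⟨X, Y, Z, ν i, q', q'', hXY, hXZ, hYZ, hq, hq', hq'',
    Or.inr ⟨hq'r, Or.inl ⟨hq''r, i, rfl, rfl⟩⟩⟩)

end Moves

lemma ne_of_joins_pairs {x y : Node n d k} {A B C D : Comp d k}
    (hx : joins x A B) (hy : joins y C D)
    (h1 : ¬(A = C ∧ B = D)) (h2 : ¬(A = D ∧ B = C)) : x ≠ y := by
  rintro rfl
  rcases joins_pair hx hy with h | h
  · exact h1 h
  · exact h2 h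

/-- The three-step detour swap: entries `ν i ∈ A ∩ B` and `ν j ∈ A ∩ C` sharing the
component `A`, with `Ld` distinct from `A`, `B`, `C`, can be exchanged. -/
lemma markEquiv_swap3 {ν : Fin r → Node n d k} (hinj : Function.Injective ν)
    {i j : Fin r} (hij : i ≠ j) {A B C Ld : Comp d k}
    (hAB : A ≠ B) (hAC : A ≠ C) (hBC : B ≠ C)
    (hALd : A ≠ Ld) (hBLd : B ≠ Ld) (hCLd : C ≠ Ld)
    (he : joins (ν i) A B) (hf : joins (ν j) A C)
    {mA mB mC : Node n d k}
    (hmA : joins mA A Ld) (hmAr : mA ∉ Set.range ν)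
    (hmB : joins mB B Ld) (hmBr : mB ∉ Set.range ν)
    (hmC : joins mC C Ld) (hmCr : mC ∉ Set.range ν) :
    MarkEquiv ν (ν ∘ Equiv.swap i j) := by
  have hmAB : mA ≠ mB :=
    ne_of_joins_pairs hmA hmB (fun h => hAB h.1) (fun h => hALd h.1)
  have hmAC : mA ≠ mC :=
    ne_of_joins_pairs hmA hmC (fun h => hAC h.1) (fun h => hALd h.1)
  have hemA : ν i ≠ mA := fun h => hmAr ⟨i, h⟩
  -- step 1 : replace ν i = e by mA
  set ν1 := Function.update ν i mA with hν1
  have t1 : MarkEquiv ν ν1 :=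
    markEquiv_treplace (X := Ld) (Y := A) (Z := B)
      hALd.symm hBLd.symm hAB he (joins_symm hmB) (joins_symm hmA) hmBr hmAr
  have hν1i : ν1 i = mA := Function.update_self i mA ν
  have hν1j : ν1 j = ν j := Function.update_of_ne (Ne.symm hij) mA ν
  -- step 2 : swap positions i and j
  have hmCr1 : mC ∉ Set.range ν1 := notMem_range_update hmCr hmAC.symm
  set ν2 := ν1 ∘ Equiv.swap i j with hν2
  have t2 : MarkEquiv ν1 ν2 := by
    apply markEquiv_tswap (X := C) (Y := A) (Z := Ld) hAC.symm hCLd hALd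
      (by rw [hν1i]; exact hmA) (by rw [hν1j]; exact joins_symm hf) hmC hmCr1
  have hν2j : ν2 j = mA := by
    show ν1 (Equiv.swap i j j) = mA
    rw [Equiv.swap_apply_right, hν1i]
  -- step 3 : replace mA at position j by e
  have her2 : ν i ∉ Set.range ν2 := by
    rw [hν2, range_comp_perm]
    exact self_notMem_range_update hinj hemA
  have hmBr2 : mB ∉ Set.range ν2 := by
    rw [hν2, range_comp_perm]
    exact notMem_range_update hmBr hmAB.symm
  have t3 : MarkEquiv ν2 (Function.update ν2 j (ν i)) :=
    markEquiv_treplace (X := B) (Y := A) (Z := Ld)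
      hAB.symm hBLd hALd (by rw [hν2j]; exact hmA)
      hmB (joins_symm he) hmBr2 her2
  have hfinal : Function.update ν2 j (ν i) = ν ∘ Equiv.swap i j := by
    funext w
    by_cases hw : w = j
    · rw [hw, Function.update_self]
      show _ = ν (Equiv.swap i j j)
      rw [Equiv.swap_apply_right]
    · rw [Function.update_of_ne hw]
      show ν1 (Equiv.swap i j w) = ν (Equiv.swap i j w)
      by_cases hw2 : w = i
      · subst hw2
        rw [Equiv.swap_apply_left]
        exact Function.update_of_ne (Ne.symm hij) mA ν
      · rw [Equiv.swap_apply_of_ne_of_ne hw2 hw]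
        exact Function.update_of_ne hw2 mA ν
  rw [← hfinal]
  exact (t1.trans t2).trans t3

/-- Entries sharing a component `A` can be exchanged, provided `A ≠ LD` or they lie
in the same pair. -/
lemma swap_adj (hn : 0 < n) (hd : 0 < d) {ν : Fin r → Node n d k}
    (hs : PropertyStar (LD hd) ν) (hinj : Function.Injective ν)
    {i j : Fin r} (hij : i ≠ j) {A B C : Comp d k} (hAB : A ≠ B) (hAC : A ≠ C)
    (he : joins (ν i) A B) (hf : joins (ν j) A C)
    (hA : A ≠ LD hd ∨ B = C) :
    MarkEquiv ν (ν ∘ Equiv.swap i j) := by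
  by_cases hBC : B = C
  · subst hBC
    exact markEquiv_dswap hAB he hf (fun h => hij (hinj h))
  · have hALd : A ≠ LD hd := hA.resolve_right hBC
    by_cases hBLd : B = LD hd
    · subst hBLd
      have hCLd : C ≠ LD hd := fun h => hBC h.symm
      obtain ⟨m, hm, hmr⟩ := missing_any hn hd hs C hCLd
      exact markEquiv_tswap (X := C) (Y := A) (Z := LD hd)
        hAC.symm hCLd hALd he (joins_symm hf) hm hmr
    · by_cases hCLd : C = LD hd
      · subst hCLd
        obtain ⟨m, hm, hmr⟩ := missing_any hn hd hs B hBLd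
        have := markEquiv_tswap (ν := ν) (i := j) (j := i) (X := B) (Y := A) (Z := LD hd)
          hAB.symm hBLd hALd hf (joins_symm he) hm hmr
        rwa [Equiv.swap_comm] at this
      · obtain ⟨mA, hmA, hmAr⟩ := missing_any hn hd hs A hALd
        obtain ⟨mB, hmB, hmBr⟩ := missing_any hn hd hs B hBLd
        obtain ⟨mC, hmC, hmCr⟩ := missing_any hn hd hs C hCLd
        exact markEquiv_swap3 hinj hij hAB hAC hBC hALd hBLd hCLd he hf
          hmA hmAr hmB hmBr hmC hmCr

lemma touches_joins {e : Node n d k} {C : Comp d k} (h : touches e C) :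
    ∃ C', joins e C C' ∧ C ≠ C' := by
  rcases h with h | h
  · exact ⟨(ends e).2, Or.inl (by rw [← h]), by rw [← h]; exact ends_ne e⟩
  · exact ⟨(ends e).1, Or.inr (by rw [← h]), by rw [← h]; exact (ends_ne e).symm⟩

lemma low_spec (hd : 0 < d) {μ : Fin r → Node n d k} (hs : PropertyStar (LD hd) μ)
    (i : Fin r) : ∃ a : Fin d, (ends (μ i)).1 = Sum.inl a ∧ (a : ℕ) < d - 1 := by
  cases h : μ i with
  | inl e =>
    refine ⟨e.1.1.1, rfl, ?_⟩
    have h1 : (e.1.1.1 : ℕ) < (e.1.1.2 : ℕ) := e.1.2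
    have h2 : (e.1.1.2 : ℕ) < d := e.1.1.2.isLt
    omega
  | inr e =>
    refine ⟨e.1, rfl, ?_⟩
    have h1 := range_LF_ne hd hs (a := e.1) (s := e.2) (by rw [h])
    have h2 : (e.1 : ℕ) < d := e.1.isLt
    omega

lemma inl_ne_LD (hd : 0 < d) {a : Fin d} (ha : (a : ℕ) < d - 1) :
    (Sum.inl a : Comp d k) ≠ LD hd := by
  unfold LD
  intro h
  have := congrArg Fin.val (Sum.inl.inj h)
  simp only [Fin.val_mk] at this
  omega

/-- Swapping two entries sharing no component other than possibly `LD`. -/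
lemma swap_noshare (hn : 0 < n) (hd : 0 < d) {ν : Fin r → Node n d k}
    (hs : PropertyStar (LD hd) ν) (hinj : Function.Injective ν)
    {i j : Fin r} (hij : i ≠ j) {a a' : Fin d}
    (hia : (ends (ν i)).1 = Sum.inl a) (hja : (ends (ν j)).1 = Sum.inl a')
    (ha : (a : ℕ) < d - 1) (ha' : (a' : ℕ) < d - 1) (haa : a < a')
    (hti : ¬ touches (ν i) (Sum.inl a')) (htj : ¬ touches (ν j) (Sum.inl a)) :
    MarkEquiv ν (ν ∘ Equiv.swap i j) := by
  set g : Node n d k := Sum.inl ⟨⟨(a, a'), haa⟩, ⟨0, hn⟩⟩ with hgdef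
  have hgj : joins g (Sum.inl a) (Sum.inl a') := Or.inl rfl
  have hgr : g ∈ Set.range ν := by
    apply star_full hs hinj
    rintro (h | h)
    · exact inl_ne_LD hd ha h
    · exact inl_ne_LD hd ha' h
  obtain ⟨l, hl⟩ := hgr
  have hti' : touches (ν l) (Sum.inl a') := by rw [hl]; exact Or.inr rfl
  have htj' : touches (ν l) (Sum.inl a) := by rw [hl]; exact Or.inl rfl
  have hli : l ≠ i := fun h => hti (h ▸ hti')
  have hlj : l ≠ j := fun h => htj (h ▸ htj')
  have hei : joins (ν i) (Sum.inl a) (ends (ν i)).2 := Or.inl (by rw [← hia])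
  have hej : joins (ν j) (Sum.inl a') (ends (ν j)).2 := Or.inl (by rw [← hja])
  have haLD : (Sum.inl a : Comp d k) ≠ LD hd := inl_ne_LD hd ha
  have ha'LD : (Sum.inl a' : Comp d k) ≠ LD hd := inl_ne_LD hd ha'
  have hne_ia : (Sum.inl a : Comp d k) ≠ (ends (ν i)).2 := by
    rw [← hia]; exact ends_ne _
  have hne_ja : (Sum.inl a' : Comp d k) ≠ (ends (ν j)).2 := by
    rw [← hja]; exact ends_ne _
  have haa' : (Sum.inl a : Comp d k) ≠ Sum.inl a' := by
    simp only [ne_eq, Sum.inl.injEq]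
    exact Fin.ne_of_lt haa
  -- step 1 : swap positions i and l
  have s1 : MarkEquiv ν (ν ∘ Equiv.swap i l) :=
    swap_adj hn hd hs hinj (fun h => hli h.symm) hne_ia haa' hei
      (by rw [hl]; exact hgj) (Or.inl haLD)
  set ν1 : Fin r → Node n d k := ν ∘ Equiv.swap i l with hν1
  have hs1 : PropertyStar (LD hd) ν1 := star_comp_perm hs _
  have hinj1 : Function.Injective ν1 := hinj.comp (Equiv.swap i l).injective
  have hν1i : ν1 i = g := by
    show ν (Equiv.swap i l i) = g
    rw [Equiv.swap_apply_left]; exact hl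
  have hν1j : ν1 j = ν j := by
    show ν (Equiv.swap i l j) = ν j
    rw [Equiv.swap_apply_of_ne_of_ne (Ne.symm hij) (Ne.symm hlj)]
  have hν1l : ν1 l = ν i := by
    show ν (Equiv.swap i l l) = ν i
    rw [Equiv.swap_apply_right]
  -- step 2 : swap positions i and j
  have s2 : MarkEquiv ν1 (ν1 ∘ Equiv.swap i j) :=
    swap_adj hn hd hs1 hinj1 hij haa'.symm hne_ja
      (by rw [hν1i]; exact joins_symm hgj) (by rw [hν1j]; exact hej) (Or.inl ha'LD)
  set ν2 : Fin r → Node n d k := ν1 ∘ Equiv.swap i j with hν2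
  have hs2 : PropertyStar (LD hd) ν2 := star_comp_perm hs1 _
  have hinj2 : Function.Injective ν2 := hinj1.comp (Equiv.swap i j).injective
  have hν2j : ν2 j = g := by
    show ν1 (Equiv.swap i j j) = g
    rw [Equiv.swap_apply_right]; exact hν1i
  have hν2l : ν2 l = ν i := by
    show ν1 (Equiv.swap i j l) = ν i
    rw [Equiv.swap_apply_of_ne_of_ne hli hlj]; exact hν1l
  -- step 3 : swap positions j and l
  have s3 : MarkEquiv ν2 (ν2 ∘ Equiv.swap j l) :=
    swap_adj hn hd hs2 hinj2 (Ne.symm hlj) haa' hne_ia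
      (by rw [hν2j]; exact hgj) (by rw [hν2l]; exact hei) (Or.inl haLD)
  have hfin : ν2 ∘ Equiv.swap j l = ν ∘ Equiv.swap i j := by
    funext w
    show ν (Equiv.swap i l (Equiv.swap i j (Equiv.swap j l w))) = ν (Equiv.swap i j w)
    by_cases hwi : w = i
    · subst hwi
      rw [Equiv.swap_apply_of_ne_of_ne hij (fun h => hli h.symm),
        Equiv.swap_apply_left, Equiv.swap_apply_of_ne_of_ne (Ne.symm hij) (Ne.symm hlj)]
    · by_cases hwj : w = j
      · subst hwj
        rw [Equiv.swap_apply_left, Equiv.swap_apply_of_ne_of_ne hli hlj,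
          Equiv.swap_apply_right, Equiv.swap_apply_right]
      · by_cases hwl : w = l
        · subst hwl
          rw [Equiv.swap_apply_right, Equiv.swap_apply_right, Equiv.swap_apply_left,
            Equiv.swap_apply_of_ne_of_ne hli hlj]
        · rw [Equiv.swap_apply_of_ne_of_ne hwj hwl,
            Equiv.swap_apply_of_ne_of_ne hwi hwj,
            Equiv.swap_apply_of_ne_of_ne hwi hwl]
  rw [← hfin]
  exact (s1.trans s2).trans s3

/-- Any two positions of a (*)-marking can be swapped. -/
lemma swap_core (hn : 0 < n) (hd : 0 < d) {ν : Fin r → Node n d k}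
    (hs : PropertyStar (LD hd) ν) (hinj : Function.Injective ν) (i j : Fin r) :
    MarkEquiv ν (ν ∘ Equiv.swap i j) := by
  rcases eq_or_ne i j with rfl | hij
  · have : ν ∘ (Equiv.swap i i : Equiv.Perm (Fin r)) = ν := by
      funext w
      show ν (Equiv.swap i i w) = ν w
      rw [Equiv.swap_self]
      rfl
    rw [this]
    exact Relation.ReflTransGen.refl
  by_cases hshare : ∃ Cc : Comp d k, Cc ≠ LD hd ∧ touches (ν i) Cc ∧ touches (ν j) Cc
  · obtain ⟨Cc, hCc, hti, htj⟩ := hshare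
    obtain ⟨B, hB, hCB⟩ := touches_joins hti
    obtain ⟨C, hC, hCC⟩ := touches_joins htj
    exact swap_adj hn hd hs hinj hij hCB hCC hB hC (Or.inl hCc)
  · push_neg at hshare
    obtain ⟨a, hia, ha⟩ := low_spec hd hs i
    obtain ⟨a', hja, ha'⟩ := low_spec hd hs j
    have hti' : ¬ touches (ν i) (Sum.inl a') := fun h =>
      hshare (Sum.inl a') (inl_ne_LD hd ha') h (Or.inl hja)
    have htj' : ¬ touches (ν j) (Sum.inl a) :=
      hshare (Sum.inl a) (inl_ne_LD hd ha) (Or.inl hia)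
    have haa : a ≠ a' := by
      intro h
      exact htj' (Or.inl (by rw [hja, h]))
    rcases lt_or_gt_of_ne haa with hlt | hgt
    · exact swap_noshare hn hd hs hinj hij hia hja ha ha' hlt hti' htj'
    · have := swap_noshare hn hd hs hinj (Ne.symm hij) hja hia ha' ha hgt htj' hti'
      rwa [Equiv.swap_comm] at this

/-- A (*)-marking is equivalent to any reordering of itself. -/
lemma markEquiv_perm (hn : 0 < n) (hd : 0 < d) (σ : Equiv.Perm (Fin r)) :
    ∀ ν : Fin r → Node n d k, PropertyStar (LD hd) ν → Function.Injective ν →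
      MarkEquiv ν (ν ∘ σ) := by
  refine Equiv.Perm.swap_induction_on σ ?_ ?_
  · intro ν _ _
    exact Relation.ReflTransGen.refl
  · intro f x y hxy IH ν hs hinj
    have h1 : MarkEquiv ν (ν ∘ Equiv.swap x y) := swap_core hn hd hs hinj x y
    have h2 : MarkEquiv (ν ∘ Equiv.swap x y) ((ν ∘ Equiv.swap x y) ∘ f) :=
      IH (ν ∘ Equiv.swap x y) (star_comp_perm hs _) (hinj.comp (Equiv.swap x y).injective)
    have h3 : (ν ∘ Equiv.swap x y) ∘ f = ν ∘ ⇑(Equiv.swap x y * f) := by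
      funext w
      show ν (Equiv.swap x y (f w)) = ν ((Equiv.swap x y * f) w)
      rw [Equiv.Perm.mul_apply]
    rw [h3] at h2
    exact h1.trans h2

/-- Main alignment induction: any two (*)-markings are equivalent. -/
lemma align (hn : 0 < n) (hd : 0 < d) :
    ∀ (m : ℕ) (μ ν : Fin r → Node n d k),
      PropertyStar (LD hd) μ → Function.Injective μ →
      PropertyStar (LD hd) ν → Function.Injective ν →
      (Set.range ν \ Set.range μ).ncard = m → MarkEquiv μ ν := by
  intro m
  induction m with
  | zero =>
    intro μ ν hsμ hiμ hsν hiν hcard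
    have hempty : Set.range ν \ Set.range μ = ∅ :=
      (Set.ncard_eq_zero (Set.toFinite _)).1 hcard
    have hsub : Set.range ν ⊆ Set.range μ := by
      intro x hx
      by_contra hxx
      have : x ∈ Set.range ν \ Set.range μ := ⟨hx, hxx⟩
      rw [hempty] at this
      exact this
    have c1 : (Set.range μ).ncard = r := by
      rw [← Nat.card_coe_set_eq]
      rw [Nat.card_congr (Equiv.ofInjective μ hiμ).symm]
      simp
    have c2 : (Set.range ν).ncard = r := by
      rw [← Nat.card_coe_set_eq]
      rw [Nat.card_congr (Equiv.ofInjective ν hiν).symm]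
      simp
    have heq : Set.range ν = Set.range μ :=
      Set.eq_of_subset_of_ncard_le hsub (by rw [c1, c2]) (Set.toFinite _)
    set σ : Equiv.Perm (Fin r) :=
      (Equiv.ofInjective ν hiν).trans ((Equiv.setCongr heq).trans
        (Equiv.ofInjective μ hiμ).symm) with hσ
    have hcomp : μ ∘ σ = ν := by
      funext l
      show μ ((Equiv.ofInjective μ hiμ).symm
        (Equiv.setCongr heq ((Equiv.ofInjective ν hiν) l))) = ν l
      rw [Equiv.apply_ofInjective_symm hiμ]
      rfl
    have := markEquiv_perm hn hd σ μ hsμ hiμ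
    rwa [hcomp] at this
  | succ m IH =>
    intro μ ν hsμ hiμ hsν hiν hcard
    have hne : (Set.range ν \ Set.range μ).Nonempty := by
      rw [Set.nonempty_iff_ne_empty]
      intro h
      rw [h, Set.ncard_empty] at hcard
      omega
    obtain ⟨e, heν, heμ⟩ := hne
    have htouch : touches e (LD hd) := by
      by_contra ht
      exact heμ (star_full hsμ hiμ e ht)
    obtain ⟨C, hC, hCne⟩ := touches_joins htouch
    have heC : joins e C (LD hd) := joins_symm hC
    obtain ⟨f, hfj, hfr⟩ := star_missing hsν (C := C) hCne.symm heC
    have hfe : f ≠ e := fun h => hfr (h ▸ heν)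
    have hfμ : f ∈ Set.range μ := by
      by_contra hfm
      exact star_unique_missing hsμ hiμ hCne.symm heC hfj hfe.symm heμ hfm
    obtain ⟨i0, hi0⟩ := hfμ
    set μ1 := Function.update μ i0 e with hμ1
    have step : MarkEquiv μ μ1 :=
      markEquiv_dreplace (C := C) (C' := LD hd) hCne.symm
        (by rw [hi0]; exact hfj) heC (by rw [hi0]; exact hfe) heμ
    have hends : ends e = ends (μ i0) := by
      rw [hi0]; exact ends_eq_of_joins heC hfj
    have hsμ1 : PropertyStar (LD hd) μ1 := star_update hsμ i0 e hends
    have hiμ1 : Function.Injective μ1 := inj_update hiμ i0 heμ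
    have hrange : Set.range ν \ Set.range μ1 = (Set.range ν \ Set.range μ) \ {e} := by
      ext x
      constructor
      · rintro ⟨hxν, hxμ1⟩
        refine ⟨⟨hxν, ?_⟩, ?_⟩
        · rintro ⟨l, hlx⟩
          by_cases hli : l = i0
          · have hxf : x = f := by rw [← hlx, hli, hi0]
            exact hfr (hxf ▸ hxν)
          · exact hxμ1 ⟨l, by rw [hμ1, Function.update_of_ne hli]; exact hlx⟩
        · intro hxe
          rw [Set.mem_singleton_iff] at hxe
          exact hxμ1 ⟨i0, by rw [hμ1, Function.update_self, hxe]⟩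
      · rintro ⟨⟨hxν, hxμ⟩, hxe⟩
        refine ⟨hxν, ?_⟩
        rintro ⟨l, hlx⟩
        by_cases hli : l = i0
        · rw [hμ1, hli, Function.update_self] at hlx
          exact hxe (by rw [Set.mem_singleton_iff, ← hlx])
        · rw [hμ1, Function.update_of_ne hli] at hlx
          exact hxμ ⟨l, hlx⟩
    have hm : (Set.range ν \ Set.range μ1).ncard = m := by
      rw [hrange, Set.ncard_diff_singleton_of_mem
        (show e ∈ Set.range ν \ Set.range μ from ⟨heν, heμ⟩), hcard]
      omega
    exact step.trans (IH μ1 ν hsμ1 hiμ1 hsν hiν hm)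

end Aux

/-- Step 2 of Lemma 4 of the paper. Assume `n > 0` and let
`r = k(d−1) + n·d(d−1)/2 − (d−1)`. Then any two `r`-markings on the curve `Γ` satisfying
property (*) are equivalent under D-moves and T-moves. -/
theorem stmt5 (n d k : ℕ) (hn : 0 < n) (hd : 0 < d)
    (μ μ' : Fin (k * (d - 1) + n * (d * (d - 1) / 2) - (d - 1)) → Node n d k)
    (hμ : Function.Injective μ) (hμ' : Function.Injective μ')
    (hs : PropertyStar (Sum.inl ⟨d - 1, by omega⟩) μ)
    (hs' : PropertyStar (Sum.inl ⟨d - 1, by omega⟩) μ') :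
    MarkEquiv μ μ' := by
  exact align hn hd _ μ μ' hs hμ hs' hμ' rfl

end SeveriMarkings
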